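/- Let F_q be a finite field and n a positive integer with q ≡ 3 (mod 4), 8 | n, and rad(n) dividing q − 1. Set m = n/gcd(n, q² − 1). Then for each odd divisor t of m, the number of distinct monic irreducible factors of x^n − 1 in F_q[x] of degree t that are binomials (i.e. of the form x^t − a with a ∈ F_q^*) equals (φ(t)/t) · gcd(n, q − 1). -/

import Mathlib

open Polynomial Finset

lemma binom_dvd_iff {F : Type*} [Field F] {t n : ℕ} (htn : t ∣ n) (ht0 : 0 < t) (a : F) :
    ((X ^ t - C a : F[X]) ∣ X ^ n - 1) ↔ a ^ (n / t) = 1 := by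
  have key : (X ^ t - C a : F[X]) ∣ X ^ n - C (a ^ (n / t)) := by
    have := sub_dvd_pow_sub_pow (X ^ t : F[X]) (C a) (n / t)
    rwa [← pow_mul, Nat.mul_div_cancel' htn, ← C_pow] at this
  constructor
  · intro h
    by_contra hne
    have h2 : (X ^ t - C a : F[X]) ∣ C (a ^ (n / t) - 1) := by
      have := dvd_sub h key
      rwa [sub_sub_sub_cancel_left, ← C_1, ← C_sub] at this
    have hC : (C (a ^ (n / t) - 1) : F[X]) ≠ 0 := by
      simp only [ne_eq, C_eq_zero, sub_eq_zero]; exact hne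
    have hle := Polynomial.natDegree_le_of_dvd h2 hC
    rw [natDegree_X_pow_sub_C, natDegree_C] at hle
    omega
  · intro h; rwa [h, C_1] at key

lemma exists_pow_eq_iff_cyclic {G : Type*} [CommGroup G] [Fintype G] [IsCyclic G] {p : ℕ}
    (hp : p.Prime) (hpc : p ∣ Fintype.card G) (u : G) :
    (∃ v : G, v ^ p = u) ↔ u ^ (Fintype.card G / p) = 1 := by
  constructor
  · rintro ⟨v, rfl⟩
    rw [← pow_mul, Nat.mul_div_cancel' hpc, pow_card_eq_one]
  · intro h
    obtain ⟨g, hg⟩ := IsCyclic.exists_generator (α := G)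
    obtain ⟨i, hi⟩ := (Submonoid.mem_powers_iff u g).mp
      (mem_powers_iff_mem_zpowers.mpr (hg u))
    have horder : orderOf g = Fintype.card G :=
      (orderOf_eq_card_of_forall_mem_zpowers hg).trans Nat.card_eq_fintype_card
    have hcp : 0 < Fintype.card G / p :=
      Nat.div_pos (Nat.le_of_dvd Fintype.card_pos hpc) hp.pos
    have h1 : g ^ (i * (Fintype.card G / p)) = 1 := by
      rw [pow_mul, hi, h]
    have h2 : Fintype.card G ∣ i * (Fintype.card G / p) := by
      have := orderOf_dvd_of_pow_eq_one h1
      rwa [horder] at this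
    have h4 : (Fintype.card G / p) * p ∣ (Fintype.card G / p) * i := by
      rw [Nat.div_mul_cancel hpc, Nat.mul_comm (Fintype.card G / p) i]
      exact h2
    have h3 : p ∣ i := (Nat.mul_dvd_mul_iff_left hcp).mp h4
    obtain ⟨j, rfl⟩ := h3
    exact ⟨g ^ j, by rw [← pow_mul, Nat.mul_comm]; exact hi⟩


lemma count_order_filter {G : Type*} [CommGroup G] [Fintype G] [IsCyclic G]
    {d r : ℕ} (hd : d ∣ Fintype.card G) (hd0 : 0 < d)
    [DecidablePred fun u : G => orderOf u ∣ d ∧ r ∣ orderOf u] :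
    (univ.filter fun u : G => orderOf u ∣ d ∧ r ∣ orderOf u).card
      = ∑ e ∈ d.divisors.filter (r ∣ ·), e.totient := by
  classical
  rw [Finset.card_eq_sum_card_fiberwise (f := orderOf)
    (t := d.divisors.filter (r ∣ ·))
    (fun u hu => by
      simp only [Finset.mem_coe, mem_filter, mem_univ, true_and] at hu
      simp only [Finset.mem_coe, mem_filter, Nat.mem_divisors]
      exact ⟨⟨hu.1, hd0.ne'⟩, hu.2⟩)]
  refine Finset.sum_congr rfl fun e he => ?_
  simp only [mem_filter, Nat.mem_divisors] at he
  have : (univ.filter fun u : G => orderOf u ∣ d ∧ r ∣ orderOf u).filter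
      (fun u => orderOf u = e) = univ.filter (fun u : G => orderOf u = e) := by
    ext u
    simp only [mem_filter, mem_univ, true_and]
    constructor
    · tauto
    · intro h; exact ⟨⟨h ▸ he.1.1, h ▸ he.2⟩, h⟩
  rw [this]
  exact IsCyclic.card_orderOf_eq_totient (he.1.1.trans hd)

lemma sum_totient_mul_div {r s : ℕ} (hr : 0 < r) (hs : 0 < s) (hco : r.Coprime s) :
    ∑ e ∈ (r * s).divisors.filter (r ∣ ·), e.totient = r.totient * s := by
  classical
  conv_rhs => rw [← Nat.sum_totient s, Finset.mul_sum]
  refine Finset.sum_nbij' (i := fun e => e / r) (j := fun k => r * k) ?_ ?_ ?_ ?_ ?_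
  · intro e he
    simp only [mem_filter, Nat.mem_divisors] at he
    obtain ⟨k, rfl⟩ := he.2
    simp only [Nat.mul_div_cancel_left k hr]
    rw [Nat.mem_divisors]
    exact ⟨(Nat.mul_dvd_mul_iff_left hr).mp he.1.1, hs.ne'⟩
  · intro k hk
    simp only [Nat.mem_divisors] at hk
    simp only [mem_filter, Nat.mem_divisors]
    exact ⟨⟨Nat.mul_dvd_mul_left r hk.1, Nat.mul_ne_zero hr.ne' hs.ne'⟩, Dvd.intro k rfl⟩
  · intro e he
    simp only [mem_filter, Nat.mem_divisors] at he
    exact Nat.mul_div_cancel' he.2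
  · intro k hk
    exact Nat.mul_div_cancel_left k hr
  · intro e he
    simp only [mem_filter, Nat.mem_divisors] at he
    obtain ⟨k, rfl⟩ := he.2
    simp only [Nat.mul_div_cancel_left k hr]
    have hks : k ∣ s := (Nat.mul_dvd_mul_iff_left hr).mp he.1.1
    rw [Nat.totient_mul (hco.coprime_dvd_right hks)]

/-- If `q ≡ 3 (mod 4)`, `8 ∣ n` and `rad(n) ∣ q - 1`, then for each odd divisor `t` of
`m = n / gcd(n, q² - 1)`, the number of distinct monic irreducible binomial factors
`x^t - a` of `x^n - 1` over `F_q` of degree `t` is `(φ(t)/t)·gcd(n, q - 1)`. -/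
theorem count_irreducible_binomials_degree_t {F : Type*} [Field F] [Fintype F]
    (q : ℕ) (hq : q = Fintype.card F) (n : ℕ) (hn : 0 < n)
    (h1 : q % 4 = 3) (h2 : 8 ∣ n)
    (h3 : (∏ p ∈ n.primeFactors, p) ∣ (q - 1))
    (m : ℕ) (hm : m = n / Nat.gcd n (q ^ 2 - 1)) :
    ∀ t, t ∣ m → Odd t →
      (({f : Polynomial F | f.Monic ∧ Irreducible f ∧ f ∣ (X ^ n - 1 : Polynomial F) ∧
            f.natDegree = t ∧ ∃ a : F, a ≠ 0 ∧ f = X ^ t - C a}.ncard : ℚ)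
        = (Nat.totient t : ℚ) / (t : ℚ) * (Nat.gcd n (q - 1) : ℚ)) := by
  classical
  intro t htm hto
  have hq2 : 2 ≤ q := by rw [hq]; exact Fintype.one_lt_card
  have hQ0 : 0 < q - 1 := by omega
  have hcard : Fintype.card Fˣ = q - 1 := by rw [Fintype.card_units, hq]
  have ht0 : 0 < t := hto.pos
  have hq21 : q ^ 2 - 1 ≠ 0 := by
    have : 2 ^ 2 ≤ q ^ 2 := Nat.pow_le_pow_left hq2 2
    omega
  have hgpos : 0 < n.gcd (q ^ 2 - 1) := Nat.gcd_pos_of_pos_left _ hn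
  have hm0 : 0 < m := by
    rw [hm]
    exact Nat.div_pos (Nat.le_of_dvd hn (Nat.gcd_dvd_left _ _)) hgpos
  have hmn : m ∣ n := hm ▸ Nat.div_dvd_of_dvd (Nat.gcd_dvd_left _ _)
  have htn : t ∣ n := htm.trans hmn
  have hpQ : ∀ p : ℕ, p.Prime → p ∣ t → p ∣ q - 1 := fun p hp hpt =>
    dvd_trans (Finset.dvd_prod_of_mem (fun p => p)
      (Nat.mem_primeFactors.mpr ⟨hp, hpt.trans htn, hn.ne'⟩)) h3
  have hvQ1 : ∀ p : ℕ, p.Prime → p ∣ t → 1 ≤ (q - 1).factorization p := fun p hp hpt =>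
    hp.factorization_pos_of_dvd hQ0.ne' (hpQ p hp hpt)
  -- KEY valuation inequality
  have key : ∀ p : ℕ, p.Prime → p ∣ t →
      t.factorization p + (q - 1).factorization p ≤ n.factorization p := by
    intro p hp hpt
    have h21 : q - 1 ∣ q ^ 2 - 1 := by
      simpa using Nat.sub_dvd_pow_sub_pow q 1 2
    have hvQ : (q - 1).factorization p ≤ (q ^ 2 - 1).factorization p :=
      Finsupp.le_def.mp ((Nat.factorization_le_iff_dvd hQ0.ne' hq21).mpr h21) p
    have hn_eq : n = n.gcd (q ^ 2 - 1) * m := by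
      rw [hm, Nat.mul_div_cancel' (Nat.gcd_dvd_left _ _)]
    have hvt : t.factorization p ≤ m.factorization p :=
      Finsupp.le_def.mp ((Nat.factorization_le_iff_dvd ht0.ne' hm0.ne').mpr htm) p
    have hvg : (n.gcd (q ^ 2 - 1)).factorization p
        = min (n.factorization p) ((q ^ 2 - 1).factorization p) := by
      rw [Nat.factorization_gcd hn.ne' hq21, Finsupp.inf_apply]
    have hvn : n.factorization p
        = (n.gcd (q ^ 2 - 1)).factorization p + m.factorization p := by
      conv_lhs => rw [hn_eq]
      rw [Nat.factorization_mul hgpos.ne' hm0.ne', Finsupp.add_apply]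
    have hpt1 : 1 ≤ t.factorization p := hp.factorization_pos_of_dvd ht0.ne' hpt
    rcases le_total (n.factorization p) ((q ^ 2 - 1).factorization p) with hc | hc
    · rw [min_eq_left hc] at hvg; omega
    · rw [min_eq_right hc] at hvg; omega
  set d := n.gcd (q - 1) with hd
  have hdn : d ∣ n := Nat.gcd_dvd_left _ _
  have hdQ : d ∣ q - 1 := Nat.gcd_dvd_right _ _
  have hd0 : 0 < d := Nat.gcd_pos_of_pos_left _ hn
  have hvd : ∀ p : ℕ, p.Prime → p ∣ t → d.factorization p = (q - 1).factorization p := by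
    intro p hp hpt
    rw [hd, Nat.factorization_gcd hn.ne' hQ0.ne', Finsupp.inf_apply]
    have := key p hp hpt
    exact min_eq_right (by omega)
  have hdt : d * t ∣ n := by
    rw [← Nat.factorization_le_iff_dvd (Nat.mul_ne_zero hd0.ne' ht0.ne') hn.ne',
      Nat.factorization_mul hd0.ne' ht0.ne']
    rw [Finsupp.le_def]
    intro p
    rw [Finsupp.add_apply]
    by_cases hp : p.Prime
    · by_cases hpt : p ∣ t
      · have h1 := key p hp hpt
        have h2 := hvd p hp hpt
        omega
      · rw [Nat.factorization_eq_zero_of_not_dvd hpt]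
        have : d.factorization p ≤ n.factorization p :=
          Finsupp.le_def.mp ((Nat.factorization_le_iff_dvd hd0.ne' hn.ne').mpr hdn) p
        omega
    · simp [Nat.factorization_eq_zero_of_not_prime _ hp]
  have hgcdnt : (n / t).gcd (q - 1) = d := by
    apply Nat.dvd_antisymm
    · exact Nat.dvd_gcd ((Nat.gcd_dvd_left (n / t) (q - 1)).trans (Nat.div_dvd_of_dvd htn))
        (Nat.gcd_dvd_right _ _)
    · refine Nat.dvd_gcd ?_ hdQ
      rw [Nat.dvd_div_iff_mul_dvd htn]
      rwa [Nat.mul_comm] at hdt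
  set r := ∏ p ∈ t.primeFactors, p ^ ((q - 1).factorization p) with hr
  have hr0 : 0 < r :=
    Finset.prod_pos fun p hp => pow_pos (Nat.prime_of_mem_primeFactors hp).pos _
  have hvr : ∀ ℓ : ℕ, r.factorization ℓ
      = if ℓ ∈ t.primeFactors then (q - 1).factorization ℓ else 0 := by
    intro ℓ
    rw [hr, Nat.factorization_prod
      (fun p hp => pow_ne_zero _ (Nat.prime_of_mem_primeFactors hp).pos.ne')]
    rw [Finsupp.coe_finset_sum, Finset.sum_apply]
    rw [Finset.sum_congr rfl (fun p hp => by
      rw [(Nat.prime_of_mem_primeFactors hp).factorization_pow, Finsupp.single_apply])]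
    exact Finset.sum_ite_eq' t.primeFactors ℓ _
  have hrd : r ∣ d := by
    rw [← Nat.factorization_le_iff_dvd hr0.ne' hd0.ne', Finsupp.le_def]
    intro ℓ
    rw [hvr]
    split_ifs with h
    · obtain ⟨hℓp, hℓt, -⟩ := Nat.mem_primeFactors.mp h
      rw [hvd ℓ hℓp hℓt]
    · exact Nat.zero_le _
  set s := d / r with hs
  have hds : d = r * s := (Nat.mul_div_cancel' hrd).symm
  have hs0 : 0 < s := Nat.div_pos (Nat.le_of_dvd hd0 hrd) hr0
  have hco : r.Coprime s := by
    by_contra hcon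
    obtain ⟨ℓ, hℓp, hℓg⟩ := Nat.exists_prime_and_dvd hcon
    have hℓr : ℓ ∣ r := hℓg.trans (Nat.gcd_dvd_left _ _)
    have hℓs : ℓ ∣ s := hℓg.trans (Nat.gcd_dvd_right _ _)
    have h1 : 1 ≤ r.factorization ℓ := hℓp.factorization_pos_of_dvd hr0.ne' hℓr
    have h2 : 1 ≤ s.factorization ℓ := hℓp.factorization_pos_of_dvd hs0.ne' hℓs
    rw [hvr] at h1
    by_cases hmem : ℓ ∈ t.primeFactors
    · obtain ⟨hp', ht', -⟩ := Nat.mem_primeFactors.mp hmem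
      have h3 : d.factorization ℓ = r.factorization ℓ + s.factorization ℓ := by
        rw [hds, Nat.factorization_mul hr0.ne' hs0.ne', Finsupp.add_apply]
      rw [hvd ℓ hp' ht', hvr, if_pos hmem] at h3
      omega
    · rw [if_neg hmem] at h1; omega
  -- condition equivalence
  have hcond : ∀ e : ℕ, e ∣ d →
      ((∀ p : ℕ, p.Prime → p ∣ t → ¬ e ∣ (q - 1) / p) ↔ r ∣ e) := by
    intro e hed
    have he0 : 0 < e := Nat.pos_of_dvd_of_pos hed hd0
    have heQ : e ∣ q - 1 := hed.trans hdQ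
    constructor
    · intro hno
      rw [← Nat.factorization_le_iff_dvd hr0.ne' he0.ne', Finsupp.le_def]
      intro ℓ
      rw [hvr]
      split_ifs with hℓ
      · obtain ⟨hℓp, hℓt, -⟩ := Nat.mem_primeFactors.mp hℓ
        by_contra hlt
        push_neg at hlt
        apply hno ℓ hℓp hℓt
        rw [Nat.dvd_div_iff_mul_dvd (hpQ ℓ hℓp hℓt)]
        rw [← Nat.factorization_le_iff_dvd (Nat.mul_ne_zero hℓp.pos.ne' he0.ne') hQ0.ne',
          Finsupp.le_def]
        intro j
        rw [Nat.factorization_mul hℓp.pos.ne' he0.ne', Finsupp.add_apply,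
          hℓp.factorization, Finsupp.single_apply]
        by_cases hj : ℓ = j
        · subst hj
          have := Finsupp.le_def.mp ((Nat.factorization_le_iff_dvd he0.ne' hQ0.ne').mpr heQ) ℓ
          rw [if_pos rfl]
          omega
        · rw [if_neg hj]
          have := Finsupp.le_def.mp ((Nat.factorization_le_iff_dvd he0.ne' hQ0.ne').mpr heQ) j
          omega
      · exact Nat.zero_le _
    · intro hre p hp hpt hediv
      have h1 : p * e ∣ q - 1 := (Nat.dvd_div_iff_mul_dvd (hpQ p hp hpt)).mp hediv
      have h2 : (q - 1).factorization p ≤ e.factorization p := by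
        have := Finsupp.le_def.mp ((Nat.factorization_le_iff_dvd hr0.ne' he0.ne').mpr hre) p
        rwa [hvr, if_pos (Nat.mem_primeFactors.mpr ⟨hp, hpt, ht0.ne'⟩)] at this
      have h3 : e.factorization p + 1 ≤ (q - 1).factorization p := by
        have := Finsupp.le_def.mp ((Nat.factorization_le_iff_dvd
          (Nat.mul_ne_zero hp.pos.ne' he0.ne') hQ0.ne').mpr h1) p
        rwa [Nat.factorization_mul hp.pos.ne' he0.ne', Finsupp.add_apply,
          hp.factorization, Finsupp.single_apply, if_pos rfl, Nat.add_comm] at this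
      omega
  -- the set bijection
  have hinj : Function.Injective (fun u : Fˣ => (X ^ t - C (u : F) : F[X])) := by
    intro u v huv
    simp only at huv
    have h1 : (C (u : F) : F[X]) = C (v : F) := by
      have := sub_right_injective huv
      exact this
    exact Units.ext (C_injective h1)
  have hirr_iff : ∀ a : F, Irreducible (X ^ t - C a : F[X]) ↔
      (∀ p : ℕ, p.Prime → p ∣ t → ∀ b : F, b ^ p ≠ a) :=
    fun a => X_pow_sub_C_irreducible_iff_forall_prime_of_odd hto
  have hset : {f : Polynomial F | f.Monic ∧ Irreducible f ∧ f ∣ (X ^ n - 1 : Polynomial F) ∧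
        f.natDegree = t ∧ ∃ a : F, a ≠ 0 ∧ f = X ^ t - C a}
      = (fun u : Fˣ => (X ^ t - C (u : F) : F[X])) ''
        {u : Fˣ | orderOf u ∣ d ∧ r ∣ orderOf u} := by
    ext f
    simp only [Set.mem_setOf_eq, Set.mem_image]
    constructor
    · rintro ⟨hmon, hirr, hdvd, hdeg, a, ha0, rfl⟩
      refine ⟨Units.mk0 a ha0, ⟨?_, ?_⟩, by rw [Units.val_mk0]⟩
      · have h1 : a ^ (n / t) = 1 := (binom_dvd_iff htn ht0 a).mp hdvd
        have h2 : (Units.mk0 a ha0) ^ (n / t) = 1 := Units.ext (by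
          rw [Units.val_pow_eq_pow_val, Units.val_mk0, h1, Units.val_one])
        have h3 : orderOf (Units.mk0 a ha0) ∣ n / t := orderOf_dvd_of_pow_eq_one h2
        have h4 : orderOf (Units.mk0 a ha0) ∣ q - 1 := hcard ▸ orderOf_dvd_card
        exact hgcdnt ▸ Nat.dvd_gcd h3 h4
      · have hodvd : orderOf (Units.mk0 a ha0) ∣ d := by
          have h1 : a ^ (n / t) = 1 := (binom_dvd_iff htn ht0 a).mp hdvd
          have h2 : (Units.mk0 a ha0) ^ (n / t) = 1 := Units.ext (by
            rw [Units.val_pow_eq_pow_val, Units.val_mk0, h1, Units.val_one])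
          have h3 : orderOf (Units.mk0 a ha0) ∣ n / t := orderOf_dvd_of_pow_eq_one h2
          have h4 : orderOf (Units.mk0 a ha0) ∣ q - 1 := hcard ▸ orderOf_dvd_card
          exact hgcdnt ▸ Nat.dvd_gcd h3 h4
        refine (hcond _ hodvd).mp ?_
        intro p hp hpt hdiv
        have hupow : (Units.mk0 a ha0) ^ ((q - 1) / p) = 1 := by
          rw [← hcard]
          rw [← hcard] at hdiv
          exact orderOf_dvd_iff_pow_eq_one.mp hdiv
        have hex : ∃ v : Fˣ, v ^ p = Units.mk0 a ha0 := by
          apply (exists_pow_eq_iff_cyclic hp (hcard ▸ hpQ p hp hpt) _).mpr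
          rw [hcard]
          exact hupow
        obtain ⟨v, hv⟩ := hex
        refine (hirr_iff a).mp hirr p hp hpt (v : F) ?_
        rw [← Units.val_pow_eq_pow_val, hv, Units.val_mk0]
    · rintro ⟨u, ⟨hod, hro⟩, rfl⟩
      have ha0 : (u : F) ≠ 0 := Units.ne_zero u
      refine ⟨monic_X_pow_sub_C _ ht0.ne', ?_, ?_, natDegree_X_pow_sub_C,
        (u : F), ha0, rfl⟩
      · rw [hirr_iff]
        intro p hp hpt b hb
        have hb0 : b ≠ 0 := by
          intro h; rw [h] at hb; simp only [zero_pow hp.pos.ne'] at hb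
          exact ha0 hb.symm
        have hv : (Units.mk0 b hb0) ^ p = u := Units.ext (by
          rw [Units.val_pow_eq_pow_val, Units.val_mk0, hb])
        have hupow : u ^ (Fintype.card Fˣ / p) = 1 :=
          (exists_pow_eq_iff_cyclic hp (hcard ▸ hpQ p hp hpt) u).mp ⟨_, hv⟩
        have hdiv : orderOf u ∣ (q - 1) / p := by
          rw [← hcard]
          exact orderOf_dvd_of_pow_eq_one hupow
        exact (hcond _ hod).mpr hro p hp hpt hdiv
      · rw [binom_dvd_iff htn ht0]
        have h5 : orderOf u ∣ n / t := hod.trans (hgcdnt ▸ Nat.gcd_dvd_left (n / t) (q - 1))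
        have h6 : u ^ (n / t) = 1 := orderOf_dvd_iff_pow_eq_one.mp h5
        calc (u : F) ^ (n / t) = ((u ^ (n / t) : Fˣ) : F) := by
              rw [Units.val_pow_eq_pow_val]
          _ = 1 := by rw [h6, Units.val_one]
  -- count
  have hsetF : {u : Fˣ | orderOf u ∣ d ∧ r ∣ orderOf u}
      = ↑(univ.filter fun u : Fˣ => orderOf u ∣ d ∧ r ∣ orderOf u) := by
    ext u; simp
  have hncard : {f : Polynomial F | f.Monic ∧ Irreducible f ∧ f ∣ (X ^ n - 1 : Polynomial F) ∧
        f.natDegree = t ∧ ∃ a : F, a ≠ 0 ∧ f = X ^ t - C a}.ncard = r.totient * s := by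
    rw [hset, Set.ncard_image_of_injective _ hinj, hsetF, Set.ncard_coe_finset,
      count_order_filter (hcard ▸ hdQ) hd0]
    rw [hds, sum_totient_mul_div hr0 hs0 hco]
  rw [hncard]
  -- final rational identity
  have hPF : r.primeFactors = t.primeFactors := by
    ext ℓ
    rw [← Nat.support_factorization, Finsupp.mem_support_iff, hvr]
    constructor
    · intro h
      by_cases hmem : ℓ ∈ t.primeFactors
      · exact hmem
      · rw [if_neg hmem] at h; exact absurd rfl h
    · intro hmem
      rw [if_pos hmem]
      obtain ⟨hp', ht', -⟩ := Nat.mem_primeFactors.mp hmem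
      have := hvQ1 ℓ hp' ht'
      omega
  have e1 : (r.totient : ℚ) = r * ∏ p ∈ t.primeFactors, (1 - (p : ℚ)⁻¹) := by
    rw [Nat.totient_eq_mul_prod_factors, hPF]
  have e2 : (t.totient : ℚ) = t * ∏ p ∈ t.primeFactors, (1 - (p : ℚ)⁻¹) :=
    Nat.totient_eq_mul_prod_factors t
  have htQ : (t : ℚ) ≠ 0 := Nat.cast_ne_zero.mpr ht0.ne'
  rw [hds]
  push_cast
  rw [e1, e2]
  field_simp
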